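/- Let A be a self-adjoint operator and suppose ψ₀, ψ₁ satisfy ‖(A - E_k)ψ_k‖ ≤ δ, |‖ψ_k‖ - 1| ≤ δ for k = 0,1, |⟨ψ₀, ψ₁⟩| ≤ δ, and |E₁ - E₀| ≤ δ, with δ sufficiently small (δ < 1/10 suffices). Then A has at least two eigenvalues (counted with multiplicity) in the interval [E₀ - Cδ, E₀ + Cδ] for some universal constant C. -/

import Mathlib

open Finset

set_option maxHeartbeats 2000000 in
/-- two almost-orthogonal approximate eigenvectors of a Hermitian
matrix `A`, with close approximate eigenvalues `E₀, E₁` and error `δ < 1/10`,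
force at least two true eigenvalues (with multiplicity) of `A` in
`[E₀ - Cδ, E₀ + Cδ]` for a universal constant `C`. -/
theorem two_approx_eigenvectors_two_eigenvalues :
    ∃ C > (0:ℝ), ∀ (n : ℕ) (A : Matrix (Fin n) (Fin n) ℂ) (hA : A.IsHermitian)
      (ψ₀ ψ₁ : Fin n → ℂ) (E₀ E₁ δ : ℝ),
      0 < δ → δ < 1/10 →
      Real.sqrt (∑ x, ‖A.mulVec ψ₀ x - (E₀ : ℂ) * ψ₀ x‖ ^ 2) ≤ δ →
      Real.sqrt (∑ x, ‖A.mulVec ψ₁ x - (E₁ : ℂ) * ψ₁ x‖ ^ 2) ≤ δ →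
      |Real.sqrt (∑ x, ‖ψ₀ x‖ ^ 2) - 1| ≤ δ →
      |Real.sqrt (∑ x, ‖ψ₁ x‖ ^ 2) - 1| ≤ δ →
      ‖∑ x, (starRingEnd ℂ) (ψ₀ x) * ψ₁ x‖ ≤ δ →
      |E₁ - E₀| ≤ δ →
      ∃ i j : Fin n, i ≠ j ∧
        |hA.eigenvalues i - E₀| ≤ C * δ ∧ |hA.eigenvalues j - E₀| ≤ C * δ := by
  refine ⟨21, by norm_num, ?_⟩
  intro n A hA ψ₀ ψ₁ E₀ E₁ δ hδ hδ' hr0 hr1 hn0 hn1 hip hE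
  by_contra hcon
  push_neg at hcon
  set b := hA.eigenvectorBasis with hb
  set lam := hA.eigenvalues with hlam
  have hsym := Matrix.isHermitian_iff_isSymmetric.mp hA
  let φ₀ : EuclideanSpace ℂ (Fin n) := (WithLp.equiv 2 (Fin n → ℂ)).symm ψ₀
  let φ₁ : EuclideanSpace ℂ (Fin n) := (WithLp.equiv 2 (Fin n → ℂ)).symm ψ₁
  let r₀ : EuclideanSpace ℂ (Fin n) :=
    (WithLp.equiv 2 (Fin n → ℂ)).symm (fun x => A.mulVec ψ₀ x - (E₀ : ℂ) * ψ₀ x)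
  let r₁ : EuclideanSpace ℂ (Fin n) :=
    (WithLp.equiv 2 (Fin n → ℂ)).symm (fun x => A.mulVec ψ₁ x - (E₁ : ℂ) * ψ₁ x)
  -- residual coefficients
  have key : ∀ (ψ : Fin n → ℂ) (E : ℝ) (i : Fin n),
      b.repr ((WithLp.equiv 2 (Fin n → ℂ)).symm (fun x => A.mulVec ψ x - (E : ℂ) * ψ x)) i
        = ((lam i - E : ℝ) : ℂ) * b.repr ((WithLp.equiv 2 (Fin n → ℂ)).symm ψ) i := by
    intro ψ E i
    set φ : EuclideanSpace ℂ (Fin n) := (WithLp.equiv 2 (Fin n → ℂ)).symm ψ with hφ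
    have h1 : (WithLp.equiv 2 (Fin n → ℂ)).symm (fun x => A.mulVec ψ x - (E : ℂ) * ψ x)
        = Matrix.toEuclideanLin A φ - ((E:ℂ)) • φ := rfl
    rw [h1, OrthonormalBasis.repr_apply_apply, OrthonormalBasis.repr_apply_apply]
    rw [inner_sub_right, inner_smul_right]
    have h2 : Matrix.toEuclideanLin A (b i) = (lam i : ℝ) • (b i) := by
      apply (WithLp.equiv 2 (Fin n → ℂ)).injective
      exact hA.mulVec_eigenvectorBasis i
    have h3 : (inner ℂ (b i) (Matrix.toEuclideanLin A φ) : ℂ)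
        = ((lam i : ℝ):ℂ) * inner ℂ (b i) φ := by
      rw [← hsym (b i) φ, h2, RCLike.real_smul_eq_coe_smul (K := ℂ), inner_smul_left]
      simp [Complex.conj_ofReal]
    rw [h3]
    push_cast
    ring
  -- real coefficient norms
  set u : Fin n → ℝ := fun i => ‖b.repr φ₀ i‖ with hu
  set v : Fin n → ℝ := fun i => ‖b.repr φ₁ i‖ with hv
  have hu0 : ∀ i, 0 ≤ u i := fun i => norm_nonneg _
  have hv0 : ∀ i, 0 ≤ v i := fun i => norm_nonneg _
  have hnormsq : ∀ (w : EuclideanSpace ℂ (Fin n)), ∑ i, ‖b.repr w i‖^2 = ‖w‖^2 := by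
    intro w
    rw [← b.repr.norm_map w, PiLp.norm_sq_eq_of_L2]
  -- norm of residuals
  have hres : ∀ (ψ : Fin n → ℂ) (E : ℝ),
      Real.sqrt (∑ x, ‖A.mulVec ψ x - (E : ℂ) * ψ x‖ ^ 2) ≤ δ →
      ∑ i, (lam i - E)^2 * ‖b.repr ((WithLp.equiv 2 (Fin n → ℂ)).symm ψ) i‖^2 ≤ δ^2 := by
    intro ψ E h
    set r : EuclideanSpace ℂ (Fin n) :=
      (WithLp.equiv 2 (Fin n → ℂ)).symm (fun x => A.mulVec ψ x - (E : ℂ) * ψ x) with hrdef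
    have hnr : ‖r‖ ≤ δ := by
      rw [EuclideanSpace.norm_eq]; exact h
    have h2 : ∑ i, (lam i - E)^2 * ‖b.repr ((WithLp.equiv 2 (Fin n → ℂ)).symm ψ) i‖^2
        = ‖r‖^2 := by
      rw [← hnormsq r]
      refine Finset.sum_congr rfl fun i _ => ?_
      rw [key ψ E i, norm_mul, mul_pow, Complex.norm_real, Real.norm_eq_abs, sq_abs]
    rw [h2]
    nlinarith [norm_nonneg r]
  have hres0 := hres ψ₀ E₀ hr0
  have hres1 := hres ψ₁ E₁ hr1
  -- Parseval lower bounds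
  have hU : (81:ℝ)/100 ≤ ∑ i, u i^2 := by
    have h1 : ‖φ₀‖ = Real.sqrt (∑ x, ‖ψ₀ x‖^2) := EuclideanSpace.norm_eq φ₀
    have h2 : 1 - δ ≤ ‖φ₀‖ := by
      rw [h1]; have := abs_le.mp hn0; linarith [this.1]
    have h3 : ∑ i, u i^2 = ‖φ₀‖^2 := hnormsq φ₀
    nlinarith
  have hV : (81:ℝ)/100 ≤ ∑ i, v i^2 := by
    have h1 : ‖φ₁‖ = Real.sqrt (∑ x, ‖ψ₁ x‖^2) := EuclideanSpace.norm_eq φ₁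
    have h2 : 1 - δ ≤ ‖φ₁‖ := by
      rw [h1]; have := abs_le.mp hn1; linarith [this.1]
    have h3 : ∑ i, v i^2 = ‖φ₁‖^2 := hnormsq φ₁
    nlinarith
  -- inner product in coefficients
  have hIP : ‖∑ i, (starRingEnd ℂ) (b.repr φ₀ i) * b.repr φ₁ i‖ ≤ δ := by
    have h1 : (inner ℂ (b.repr φ₀) (b.repr φ₁) : ℂ) = inner ℂ φ₀ φ₁ :=
      b.repr.inner_map_map φ₀ φ₁
    have h2 : ∑ i, (starRingEnd ℂ) (b.repr φ₀ i) * b.repr φ₁ i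
        = ∑ x, (starRingEnd ℂ) (ψ₀ x) * ψ₁ x := by
      calc ∑ i, (starRingEnd ℂ) (b.repr φ₀ i) * b.repr φ₁ i
          = (inner ℂ (b.repr φ₀) (b.repr φ₁) : ℂ) := by
            rw [PiLp.inner_apply]; exact Finset.sum_congr rfl fun i _ => (RCLike.inner_apply' _ _).symm
        _ = (inner ℂ φ₀ φ₁ : ℂ) := h1
        _ = ∑ x, (starRingEnd ℂ) (ψ₀ x) * ψ₁ x := by
            rw [PiLp.inner_apply]; exact Finset.sum_congr rfl fun i _ => RCLike.inner_apply' _ _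
    rw [h2]; exact hip
  -- the set of close eigenvalues
  classical
  set S : Finset (Fin n) := univ.filter (fun i => |lam i - E₀| ≤ 21 * δ) with hS
  -- outside mass bounds
  have hout : ∀ (ψ : Fin n → ℂ) (E : ℝ),
      (∑ i, (lam i - E)^2 * ‖b.repr ((WithLp.equiv 2 (Fin n → ℂ)).symm ψ) i‖^2 ≤ δ^2) →
      (∀ i ∈ Sᶜ, (400:ℝ) * δ^2 ≤ (lam i - E)^2) →
      ∑ i ∈ Sᶜ, ‖b.repr ((WithLp.equiv 2 (Fin n → ℂ)).symm ψ) i‖^2 ≤ 1/400 := by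
    intro ψ E h hlow
    set w : Fin n → ℝ := fun i => ‖b.repr ((WithLp.equiv 2 (Fin n → ℂ)).symm ψ) i‖^2 with hw
    have hw0 : ∀ i, 0 ≤ w i := fun i => sq_nonneg _
    have step1 : (400:ℝ) * δ^2 * ∑ i ∈ Sᶜ, w i ≤ ∑ i ∈ Sᶜ, (lam i - E)^2 * w i := by
      rw [Finset.mul_sum]
      refine Finset.sum_le_sum fun i hi => ?_
      exact mul_le_mul_of_nonneg_right (hlow i hi) (hw0 i)
    have step2 : ∑ i ∈ Sᶜ, (lam i - E)^2 * w i ≤ ∑ i, (lam i - E)^2 * w i :=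
      Finset.sum_le_sum_of_subset_of_nonneg (Finset.subset_univ _)
        (fun i _ _ => mul_nonneg (sq_nonneg _) (hw0 i))
    have h400 : (0:ℝ) < 400 * δ^2 := by positivity
    have hsum := step1.trans (step2.trans h)
    nlinarith [mul_pos hδ hδ, Finset.sum_nonneg (fun i (_ : i ∈ Sᶜ) => hw0 i)]
  have hlow0 : ∀ i ∈ Sᶜ, (400:ℝ) * δ^2 ≤ (lam i - E₀)^2 := by
    intro i hi
    rw [Finset.mem_compl, hS, Finset.mem_filter] at hi
    push_neg at hi
    have h1 : 21 * δ < |lam i - E₀| := hi (Finset.mem_univ i)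
    nlinarith [sq_abs (lam i - E₀), abs_nonneg (lam i - E₀)]
  have hlow1 : ∀ i ∈ Sᶜ, (400:ℝ) * δ^2 ≤ (lam i - E₁)^2 := by
    intro i hi
    rw [Finset.mem_compl, hS, Finset.mem_filter] at hi
    push_neg at hi
    have h1 : 21 * δ < |lam i - E₀| := hi (Finset.mem_univ i)
    have h2 : |lam i - E₀| ≤ |lam i - E₁| + |E₁ - E₀| := abs_sub_le _ _ _
    nlinarith [sq_abs (lam i - E₁), abs_nonneg (lam i - E₁)]
  have hout0 : ∑ i ∈ Sᶜ, u i^2 ≤ 1/400 := hout ψ₀ E₀ hres0 hlow0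
  have hout1 : ∑ i ∈ Sᶜ, v i^2 ≤ 1/400 := hout ψ₁ E₁ hres1 hlow1
  -- inside mass lower bounds
  have hsplitU : ∑ i ∈ S, u i^2 + ∑ i ∈ Sᶜ, u i^2 = ∑ i, u i^2 :=
    Finset.sum_add_sum_compl S _
  have hsplitV : ∑ i ∈ S, v i^2 + ∑ i ∈ Sᶜ, v i^2 = ∑ i, v i^2 :=
    Finset.sum_add_sum_compl S _
  have hinU : (323:ℝ)/400 ≤ ∑ i ∈ S, u i^2 := by linarith
  have hinV : (323:ℝ)/400 ≤ ∑ i ∈ S, v i^2 := by linarith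
  -- S is nonempty and a singleton
  have hSne : S.Nonempty := by
    rcases S.eq_empty_or_nonempty with h | h
    · rw [h, Finset.sum_empty] at hinU; linarith
    · exact h
  obtain ⟨i₀, hi₀⟩ := hSne
  have hmem : ∀ j ∈ S, |lam j - E₀| ≤ 21 * δ := by
    intro j hj; rw [hS, Finset.mem_filter] at hj; exact hj.2
  have hSsing : S = {i₀} := by
    apply Finset.eq_singleton_iff_unique_mem.mpr
    refine ⟨hi₀, fun j hj => ?_⟩
    by_contra hne
    exact absurd (hmem j hj) (not_le.mpr (hcon i₀ j (Ne.symm hne) (hmem i₀ hi₀)))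
  rw [hSsing, Finset.sum_singleton] at hinU hinV
  -- Cauchy-Schwarz on the outside
  have hCS : (∑ i ∈ Sᶜ, u i * v i)^2 ≤ (∑ i ∈ Sᶜ, u i^2) * (∑ i ∈ Sᶜ, v i^2) :=
    Finset.sum_mul_sq_le_sq_mul_sq _ _ _
  have hoffnn : (0:ℝ) ≤ ∑ i ∈ Sᶜ, u i * v i :=
    Finset.sum_nonneg fun i _ => mul_nonneg (hu0 i) (hv0 i)
  have hoff : ∑ i ∈ Sᶜ, u i * v i ≤ 1/400 := by
    have hA0 : (0:ℝ) ≤ ∑ i ∈ Sᶜ, u i^2 :=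
      Finset.sum_nonneg fun i _ => sq_nonneg _
    have h1 : (∑ i ∈ Sᶜ, u i * v i)^2 ≤ (1/400)^2 := by
      refine hCS.trans ?_
      have := mul_le_mul hout0 hout1 (Finset.sum_nonneg fun i _ => sq_nonneg (v i)) (by norm_num)
      linarith
    nlinarith
  -- split the inner product
  have hsplitIP : ∑ i ∈ S, (starRingEnd ℂ) (b.repr φ₀ i) * b.repr φ₁ i
      + ∑ i ∈ Sᶜ, (starRingEnd ℂ) (b.repr φ₀ i) * b.repr φ₁ i
      = ∑ i, (starRingEnd ℂ) (b.repr φ₀ i) * b.repr φ₁ i :=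
    Finset.sum_add_sum_compl S _
  rw [hSsing, Finset.sum_singleton] at hsplitIP
  have hmain : u i₀ * v i₀ ≤ δ + 1/400 := by
    have h1 : ‖(starRingEnd ℂ) (b.repr φ₀ i₀) * b.repr φ₁ i₀‖ = u i₀ * v i₀ := by
      rw [norm_mul, RCLike.norm_conj]
    have h2 : ‖∑ i ∈ Sᶜ, (starRingEnd ℂ) (b.repr φ₀ i) * b.repr φ₁ i‖
        ≤ ∑ i ∈ Sᶜ, u i * v i := by
      refine (norm_sum_le _ _).trans (le_of_eq ?_)
      refine Finset.sum_congr rfl fun i _ => ?_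
      rw [norm_mul, RCLike.norm_conj]
    calc u i₀ * v i₀ = ‖(starRingEnd ℂ) (b.repr φ₀ i₀) * b.repr φ₁ i₀‖ := h1.symm
      _ = ‖(∑ i, (starRingEnd ℂ) (b.repr φ₀ i) * b.repr φ₁ i)
            - ∑ i ∈ Sᶜ, (starRingEnd ℂ) (b.repr φ₀ i) * b.repr φ₁ i‖ := by
          rw [eq_sub_of_add_eq hsplitIP, hSsing]
      _ ≤ ‖∑ i, (starRingEnd ℂ) (b.repr φ₀ i) * b.repr φ₁ i‖
            + ‖∑ i ∈ Sᶜ, (starRingEnd ℂ) (b.repr φ₀ i) * b.repr φ₁ i‖ := norm_sub_le _ _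
      _ ≤ δ + ∑ i ∈ Sᶜ, u i * v i := add_le_add hIP h2
      _ ≤ δ + 1/400 := by linarith
  -- but u i₀ * v i₀ is large
  have hbig : (323:ℝ)/400 ≤ u i₀ * v i₀ := by
    nlinarith [hu0 i₀, hv0 i₀, mul_nonneg (hu0 i₀) (hv0 i₀)]
  linarith
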